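/- Let ν and η be probability measures on [0,∞) with continuous densities f(x)=exp(−φ(x)) and g(x)=exp(−γ(x)), where f is bounded, g/f is bounded on every compact interval, and f(x)>0 for x above some threshold. Fix α>1 and set h(x) = α·γ(x)/φ(x) − (α−1). Suppose h(x) converges as x→∞ and suppose there exists T ∈ ℝ such that ∫₀^∞ f(x)^t dx = ∞ for all t < T and ∫₀^∞ f(x)^t dx < ∞ for all t > T. Then lim_{x→∞} h(x) > T implies D^α(η|ν) < ∞, and lim_{x→∞} h(x) < T implies D^α(η|ν) = ∞. -/

import Mathlib

open Filter MeasureTheory Set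
open scoped ENNReal Topology

noncomputable section

/-- The `F`-divergence `D_F(η|ν)` between a reference density `f` and an
alternative density `g` on `(0,∞)` (the value `⊤` encodes an infinite divergence). -/
def Ddiv (F f g : ℝ → ℝ) : ℝ≥0∞ :=
  ∫⁻ x in Set.Ioi (0 : ℝ), ENNReal.ofReal (F (g x / f x) * f x)

/-- Generator of the polynomial (α-) divergence: `F(y) = (y^α - 1)/(α(α-1))`. -/
def Falpha (α : ℝ) : ℝ → ℝ := fun y => (y ^ α - 1) / (α * (α - 1))

/-- Class (i): the log-density grows at least linearly, `lim φ(x)/x > c > 0`. -/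
def IsClassI (φ : ℝ → ℝ) : Prop :=
  ∃ c : ℝ, 0 < c ∧ ∀ᶠ x in atTop, c < φ x / x

/-- Data witnessing that a distribution with log-density `φ` (density `exp(-φ)`) is of
class (ii): heavier than exponential but lighter than any power law, together with the
auxiliary function `Φ` and the inverse `Ψ = Φ⁻¹` of its restriction to `[x̄, ∞)`. -/
structure ClassIIData (φ : ℝ → ℝ) : Type where
  xbar : ℝ
  Φ : ℝ → ℝ
  Ψ : ℝ → ℝ
  xbar_pos : 0 < xbar
  tendsto_div_id : Tendsto (fun x => φ x / x) atTop (nhds 0)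
  tendsto_div_log : Tendsto (fun x => φ x / Real.log x) atTop atTop
  pos : ∀ x ∈ Set.Ici xbar, 0 < Φ x
  strictConcave : StrictConcaveOn ℝ (Set.Ici xbar) Φ
  smooth : ContDiffOn ℝ 2 Φ (Set.Ici xbar)
  strictMono : StrictMonoOn Φ (Set.Ici xbar)
  inv_left : ∀ x ∈ Set.Ici xbar, Ψ (Φ x) = x
  inv_right : ∀ y ∈ Set.Ici (Φ xbar), Φ (Ψ y) = y
  liminf_pos : ∃ c : ℝ, 0 < c ∧ ∀ᶠ x in atTop, c ≤ Ψ (φ x) / x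
  limsup_lt_top : ∃ C : ℝ, ∀ᶠ x in atTop, Ψ (φ x) / x ≤ C

namespace ClassIIData

variable {φ : ℝ → ℝ}

/-- `ȳ = exp(Φ(x̄))`. -/
def ybar (d : ClassIIData φ) : ℝ := Real.exp (d.Φ d.xbar)

/-- The constant `a = (1+log ȳ)/(Φ⁻¹(log ȳ)^θ + θ Φ⁻¹(log ȳ)^{θ-1} (Φ⁻¹)'(log ȳ))`. -/
def aconst (d : ClassIIData φ) (θ : ℝ) : ℝ :=
  (1 + Real.log d.ybar) /
    (d.Ψ (Real.log d.ybar) ^ θ +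
      θ * d.Ψ (Real.log d.ybar) ^ (θ - 1) * deriv d.Ψ (Real.log d.ybar))

/-- The constant `b = ȳ log ȳ - a ȳ Φ⁻¹(log ȳ)^θ`. -/
def bconst (d : ClassIIData φ) (θ : ℝ) : ℝ :=
  d.ybar * Real.log d.ybar - d.aconst θ * d.ybar * d.Ψ (Real.log d.ybar) ^ θ

/-- The divergence generator `F_Φ`: `y log y` for `y ≤ ȳ` and
`a y Φ⁻¹(log y)^θ + b` for `y > ȳ`. -/
def FPhi (d : ClassIIData φ) (θ : ℝ) : ℝ → ℝ := fun y =>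
  if y ≤ d.ybar then y * Real.log y
  else d.aconst θ * y * d.Ψ (Real.log y) ^ θ + d.bconst θ

/-- `ψ(x) = a Φ⁻¹(x)^θ`. -/
def psiFun (d : ClassIIData φ) (θ : ℝ) : ℝ → ℝ := fun x => d.aconst θ * d.Ψ x ^ θ

/-- The integrand of `I(c) = ∫_c^∞ e^y (ψ(y)+ψ'(y))(ψ'(y)+ψ''(y)) f((F_Φ'(e^y)-α₁)/α₂) dy`. -/
def Iintegrand (d : ClassIIData φ) (θ α₁ α₂ : ℝ) (f : ℝ → ℝ) : ℝ → ℝ := fun y =>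
  Real.exp y * (d.psiFun θ y + deriv (d.psiFun θ) y) *
    (deriv (d.psiFun θ) y + deriv (deriv (d.psiFun θ)) y) *
    f ((deriv (d.FPhi θ) (Real.exp y) - α₁) / α₂)

end ClassIIData

/-- Convex conjugate over `s ≥ 0`: `F*(x) = sup_{s ≥ 0} (x s - F(s))`. -/
def Fstar (F : ℝ → ℝ) : ℝ → ℝ := fun x => sSup ((fun s => x * s - F s) '' Set.Ici (0 : ℝ))

/-- Pseudo-regular variation: `limsup_{c→1} limsup_{x→∞} h(cx)/h(x) = 1`,
spelled out in ε-form. -/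
def PseudoRegularlyVarying (h : ℝ → ℝ) : Prop :=
  (∀ ε > (0:ℝ), ∀ᶠ c in nhds (1:ℝ), ∀ᶠ x in atTop, h (c * x) / h x ≤ 1 + ε) ∧
  (∀ ε > (0:ℝ), ∃ᶠ c in nhds (1:ℝ), ∃ᶠ x in atTop, 1 - ε ≤ h (c * x) / h x)


/-- `ofReal` ignores the truncation at `0`. -/
lemma ofReal_max_zero' (a : ℝ) : ENNReal.ofReal (max a 0) = ENNReal.ofReal a := by
  rcases le_total a 0 with h | h
  · rw [max_eq_right h, ENNReal.ofReal_zero, eq_comm, ENNReal.ofReal_eq_zero]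
    exact h
  · rw [max_eq_left h]

/-- the key claim in the proof of Proposition 3.3. -/
theorem stmt4
    (φ γ f g : ℝ → ℝ) (α : ℝ) (hα : 1 < α)
    (hf : ∀ x ∈ Set.Ioi (0:ℝ), f x = Real.exp (-(φ x)))
    (hg : ∀ x ∈ Set.Ioi (0:ℝ), g x = Real.exp (-(γ x)))
    (hfc : ContinuousOn f (Set.Ioi 0)) (hgc : ContinuousOn g (Set.Ioi 0))
    (hfint : ∫ x in Set.Ioi (0:ℝ), f x = 1)
    (hgint : ∫ x in Set.Ioi (0:ℝ), g x = 1)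
    (hbdd : ∃ M : ℝ, ∀ x ∈ Set.Ioi (0:ℝ), f x ≤ M)
    (hratio : ∀ K : Set ℝ, IsCompact K → ∃ C : ℝ, ∀ x ∈ K ∩ Set.Ioi (0:ℝ), g x / f x ≤ C)
    (H : ℝ)
    (hconv : Tendsto (fun x => α * γ x / φ x - (α - 1)) atTop (nhds H))
    (T : ℝ)
    (hTinf : ∀ t : ℝ, t < T → (∫⁻ x in Set.Ioi (0:ℝ), ENNReal.ofReal (f x ^ t)) = ⊤)
    (hTfin : ∀ t : ℝ, T < t → (∫⁻ x in Set.Ioi (0:ℝ), ENNReal.ofReal (f x ^ t)) < ⊤) :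
    (T < H → Ddiv (Falpha α) f g < ⊤) ∧
    (H < T → Ddiv (Falpha α) f g = ⊤) := by
  have hα0 : (0:ℝ) < α := lt_trans one_pos hα
  have hc : (0:ℝ) < α * (α - 1) := mul_pos hα0 (by linarith)
  obtain ⟨M, hM⟩ := hbdd
  set M' : ℝ := max M 1 with hM'def
  have hM'1 : (1:ℝ) ≤ M' := le_max_right _ _
  have hM'0 : (0:ℝ) < M' := lt_of_lt_of_le one_pos hM'1
  have hfM : ∀ x ∈ Set.Ioi (0:ℝ), f x ≤ M' := fun x hx => (hM x hx).trans (le_max_left _ _)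
  have hfpos : ∀ x ∈ Set.Ioi (0:ℝ), 0 < f x := fun x hx => by
    rw [hf x hx]; exact Real.exp_pos _
  have hgpos : ∀ x ∈ Set.Ioi (0:ℝ), 0 < g x := fun x hx => by
    rw [hg x hx]; exact Real.exp_pos _
  -- `T ≥ 0`
  have hT0 : 0 ≤ T := by
    by_contra h
    have h2 := hTfin 0 (lt_of_not_ge h)
    simp only [Real.rpow_zero, ENNReal.ofReal_one, setLIntegral_one, Real.volume_Ioi] at h2
    exact absurd h2 (lt_irrefl _)
  -- measurability and integrability of `f`
  have hfm : AEMeasurable f (volume.restrict (Set.Ioi (0:ℝ))) :=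
    hfc.aemeasurable measurableSet_Ioi
  have hfInt : Integrable f (volume.restrict (Set.Ioi (0:ℝ))) := by
    by_contra h
    rw [MeasureTheory.integral_undef h] at hfint
    norm_num at hfint
  have hfl1 : (∫⁻ x in Set.Ioi (0:ℝ), ENNReal.ofReal (f x)) = 1 := by
    rw [← MeasureTheory.ofReal_integral_eq_lintegral_ofReal hfInt
      ((ae_restrict_iff' measurableSet_Ioi).2
        (Filter.Eventually.of_forall (fun x hx => (hfpos x hx).le))), hfint, ENNReal.ofReal_one]
  -- Markov: the set where `f ≥ 1` has measure at most `1`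
  have hmes1 : volume.restrict (Set.Ioi (0:ℝ)) {x | 1 ≤ ENNReal.ofReal (f x)} ≤ 1 := by
    have h := mul_meas_ge_le_lintegral₀ hfm.ennreal_ofReal 1
    rwa [one_mul, hfl1] at h
  have hbig : ∀ S : Set ℝ, S ⊆ Set.Ioi (0:ℝ) → (∀ x ∈ S, 1 ≤ f x) → volume S ≤ 1 := by
    intro S hS h1
    have hvol : volume S = volume.restrict (Set.Ioi (0:ℝ)) S := by
      rw [Measure.restrict_apply' measurableSet_Ioi, Set.inter_eq_left.mpr hS]
    rw [hvol]
    refine le_trans (measure_mono ?_) hmes1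
    intro x hx
    exact ENNReal.one_le_ofReal.mpr (h1 x hx)
  -- the open set where `f < 1`
  set U : Set ℝ := Set.Ioi (0:ℝ) ∩ f ⁻¹' Set.Iio 1 with hUdef
  have hUopen : IsOpen U := hfc.isOpen_inter_preimage isOpen_Ioi isOpen_Iio
  have hUmeas : MeasurableSet U := hUopen.measurableSet
  -- pointwise formulas
  have hE : ∀ x ∈ Set.Ioi (0:ℝ),
      (g x / f x) ^ α * f x = Real.exp ((α - 1) * φ x - α * γ x) := by
    intro x hx
    rw [hf x hx, hg x hx, ← Real.exp_sub, Real.rpow_def_of_pos (Real.exp_pos _), Real.log_exp,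
      ← Real.exp_add]
    congr 1
    ring
  have hft : ∀ t : ℝ, ∀ x ∈ Set.Ioi (0:ℝ), f x ^ t = Real.exp (-(t * φ x)) := by
    intro t x hx
    rw [hf x hx, Real.rpow_def_of_pos (Real.exp_pos _), Real.log_exp]
    congr 1
    ring
  have hFf : ∀ x ∈ Set.Ioi (0:ℝ),
      Falpha α (g x / f x) * f x = ((g x / f x) ^ α * f x - f x) / (α * (α - 1)) := by
    intro x hx
    simp only [Falpha]
    rw [div_mul_eq_mul_div, sub_mul, one_mul]
  -- tail integrals of `f ^ t` diverge for `t < T`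
  have hTail : ∀ t : ℝ, t < T → ∀ X : ℝ, 1 ≤ X →
      (∫⁻ x in Set.Ioi X, ENNReal.ofReal (f x ^ t)) = ⊤ := by
    intro t ht X hX
    have hXsub : Set.Ioi X ⊆ Set.Ioi (0:ℝ) := fun x hx =>
      lt_trans (lt_of_lt_of_le one_pos hX) hx
    rcases le_or_gt t 0 with h0 | h0
    · rw [eq_top_iff]
      calc (⊤:ℝ≥0∞) = ENNReal.ofReal (M' ^ t) * volume (Set.Ioi X) := by
            rw [Real.volume_Ioi, ENNReal.mul_top]
            exact (ENNReal.ofReal_pos.mpr (Real.rpow_pos_of_pos hM'0 t)).ne'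
        _ = ∫⁻ _ in Set.Ioi X, ENNReal.ofReal (M' ^ t) := (setLIntegral_const _ _).symm
        _ ≤ ∫⁻ x in Set.Ioi X, ENNReal.ofReal (f x ^ t) := by
            refine setLIntegral_mono' measurableSet_Ioi (fun x hx => ?_)
            exact ENNReal.ofReal_le_ofReal
              (Real.rpow_le_rpow_of_nonpos (hfpos x (hXsub hx)) (hfM x (hXsub hx)) h0)
    · have htot := hTinf t ht
      have hsplit : (∫⁻ x in Set.Ioi (0:ℝ), ENNReal.ofReal (f x ^ t)) ≤
          (∫⁻ x in Set.Ioc (0:ℝ) X, ENNReal.ofReal (f x ^ t)) +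
            ∫⁻ x in Set.Ioi X, ENNReal.ofReal (f x ^ t) := by
        refine le_trans (lintegral_mono_set ?_) (lintegral_union_le _ _ _)
        intro x hx
        rcases le_or_gt x X with h | h
        · exact Or.inl ⟨hx, h⟩
        · exact Or.inr h
      have hcomp : (∫⁻ x in Set.Ioc (0:ℝ) X, ENNReal.ofReal (f x ^ t)) < ⊤ := by
        calc (∫⁻ x in Set.Ioc (0:ℝ) X, ENNReal.ofReal (f x ^ t))
            ≤ ∫⁻ _ in Set.Ioc (0:ℝ) X, ENNReal.ofReal (M' ^ t) := by
              refine setLIntegral_mono' measurableSet_Ioc (fun x hx => ?_)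
              exact ENNReal.ofReal_le_ofReal
                (Real.rpow_le_rpow (hfpos x hx.1).le (hfM x hx.1) h0.le)
          _ = ENNReal.ofReal (M' ^ t) * volume (Set.Ioc (0:ℝ) X) := setLIntegral_const _ _
          _ < ⊤ := by
              rw [Real.volume_Ioc]
              exact ENNReal.mul_lt_top ENNReal.ofReal_lt_top ENNReal.ofReal_lt_top
      by_contra hne
      have hlt : (∫⁻ x in Set.Ioi (0:ℝ), ENNReal.ofReal (f x ^ t)) < ⊤ :=
        lt_of_le_of_lt hsplit (ENNReal.add_lt_top.mpr ⟨hcomp, lt_top_iff_ne_top.mpr hne⟩)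
      rw [htot] at hlt
      exact absurd hlt (lt_irrefl _)
  constructor
  · -- `T < H` : finiteness
    intro hTH
    set t : ℝ := (T + H)/2 with htdef
    have ht1 : T < t := by rw [htdef]; linarith
    have ht2 : t < H := by rw [htdef]; linarith
    have htpos : 0 < t := lt_of_le_of_lt hT0 ht1
    have hH1 : (0:ℝ) < H + 1 := by linarith
    have hev : ∀ᶠ x in atTop, α * γ x / φ x - (α - 1) ∈ Set.Ioo t (H+1) :=
      hconv.eventually (Ioo_mem_nhds ht2 (by linarith))
    obtain ⟨X₀, hX₀⟩ := Filter.eventually_atTop.mp hev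
    set X : ℝ := max X₀ 1 with hXdef
    have hX1 : (1:ℝ) ≤ X := le_max_right _ _
    have hXsub : Set.Ioi X ⊆ Set.Ioi (0:ℝ) := fun x hx =>
      lt_trans (lt_of_lt_of_le one_pos hX1) hx
    have hh : ∀ x ∈ Set.Ioi X, α * γ x / φ x - (α - 1) ∈ Set.Ioo t (H+1) := fun x hx =>
      hX₀ x (le_trans (le_max_left _ _) hx.le)
    have hφne : ∀ x ∈ Set.Ioi X, φ x ≠ 0 := by
      intro x hx h0
      have h1 := (hh x hx).1
      rw [h0, div_zero] at h1
      linarith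
    -- tail bound on `f < 1`
    have hbound2 : ∀ x ∈ Set.Ioi X ∩ U,
        Falpha α (g x / f x) * f x ≤ (α*(α-1))⁻¹ * f x ^ t := by
      rintro x ⟨hx, hxU⟩
      have hx0 : x ∈ Set.Ioi (0:ℝ) := hXsub hx
      have hflt : f x < 1 := hxU.2
      have hφpos : 0 < φ x := by
        by_contra hle
        push_neg at hle
        have h1 : (1:ℝ) ≤ f x := by
          rw [hf x hx0]
          exact Real.one_le_exp (by linarith)
        linarith
      have hhx := (hh x hx).1
      have hγ : (t + (α - 1)) * φ x < α * γ x := by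
        have h' : t + (α-1) < α * γ x / φ x := by linarith
        exact (lt_div_iff₀ hφpos).mp h'
      have hEle : (g x / f x) ^ α * f x ≤ f x ^ t := by
        rw [hE x hx0, hft t x hx0]
        exact Real.exp_le_exp.mpr (by nlinarith)
      rw [hFf x hx0]
      calc ((g x / f x) ^ α * f x - f x) / (α * (α - 1))
          ≤ ((g x / f x) ^ α * f x) / (α * (α - 1)) := by
            apply div_le_div_of_nonneg_right ?_ hc.le
            · linarith [hfpos x hx0]
        _ ≤ (f x ^ t) / (α * (α - 1)) := by
            exact div_le_div_of_nonneg_right hEle hc.le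
        _ = (α*(α-1))⁻¹ * f x ^ t := by rw [div_eq_inv_mul]
    -- tail bound on `f ≥ 1`
    have hfge1 : ∀ x ∈ Set.Ioi X \ U, 1 ≤ f x := by
      rintro x ⟨hx, hxU⟩
      by_contra hlt
      push_neg at hlt
      exact hxU ⟨hXsub hx, hlt⟩
    set K₂ : ℝ := Real.exp ((H+1) * Real.log M') with hK2
    have hbound3 : ∀ x ∈ Set.Ioi X \ U,
        Falpha α (g x / f x) * f x ≤ (α*(α-1))⁻¹ * K₂ := by
      rintro x hxm
      obtain ⟨hx, hxU⟩ := hxm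
      have hx0 : x ∈ Set.Ioi (0:ℝ) := hXsub hx
      have hfge : 1 ≤ f x := hfge1 x ⟨hx, hxU⟩
      have hφle : φ x ≤ 0 := by
        by_contra hpos
        push_neg at hpos
        have h1 : f x < 1 := by
          rw [hf x hx0]
          exact Real.exp_lt_one_iff.mpr (by linarith)
        linarith
      have hφneg : φ x < 0 := lt_of_le_of_ne hφle (hφne x hx)
      have hhx := (hh x hx).2
      have hγ : (H + α) * φ x < α * γ x := by
        have h' : α * γ x / φ x < H + α := by linarith
        exact (div_lt_iff_of_neg hφneg).mp h'
      have hlog : -φ x ≤ Real.log M' := by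
        have h2 := Real.log_le_log (hfpos x hx0) (hfM x hx0)
        rw [hf x hx0, Real.log_exp] at h2
        linarith
      have hEle : (g x / f x) ^ α * f x ≤ K₂ := by
        rw [hE x hx0, hK2]
        apply Real.exp_le_exp.mpr
        have h3 : (α-1)*φ x - α*γ x ≤ (H+1) * (-φ x) := by nlinarith
        have h4 : (H+1) * (-φ x) ≤ (H+1) * Real.log M' :=
          mul_le_mul_of_nonneg_left hlog hH1.le
        linarith
      rw [hFf x hx0]
      calc ((g x / f x) ^ α * f x - f x) / (α * (α - 1))
          ≤ ((g x / f x) ^ α * f x) / (α * (α - 1)) := by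
            apply div_le_div_of_nonneg_right ?_ hc.le
            · linarith [hfpos x hx0]
        _ ≤ K₂ / (α * (α - 1)) := div_le_div_of_nonneg_right hEle hc.le
        _ = (α*(α-1))⁻¹ * K₂ := by rw [div_eq_inv_mul]
    -- compact part bound
    obtain ⟨C, hC⟩ := hratio (Set.Icc 0 X) isCompact_Icc
    set C' : ℝ := max C 0 with hC'
    set K₁ : ℝ := C'^α / (α*(α-1)) * M' with hK1
    have hbound1 : ∀ x ∈ Set.Ioc (0:ℝ) X, Falpha α (g x / f x) * f x ≤ K₁ := by
      intro x hx
      have hx0 : x ∈ Set.Ioi (0:ℝ) := hx.1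
      have hgf0 : 0 ≤ g x / f x := le_of_lt (div_pos (hgpos x hx0) (hfpos x hx0))
      have hgfC : g x / f x ≤ C' :=
        le_trans (hC x ⟨⟨hx.1.le, hx.2⟩, hx0⟩) (le_max_left _ _)
      have hFle : Falpha α (g x / f x) ≤ C'^α / (α*(α-1)) := by
        simp only [Falpha]
        apply div_le_div_of_nonneg_right ?_ hc.le
        have := Real.rpow_le_rpow hgf0 hgfC hα0.le
        linarith
      rcases le_or_gt (Falpha α (g x / f x)) 0 with hneg | hpos
      · refine le_trans (mul_nonpos_of_nonpos_of_nonneg hneg (hfpos x hx0).le) ?_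
        rw [hK1]
        have h1 : (0:ℝ) ≤ C'^α / (α*(α-1)) := by positivity
        positivity
      · calc Falpha α (g x / f x) * f x
            ≤ (C'^α/(α*(α-1))) * M' := by
              refine mul_le_mul hFle (hfM x hx0) (hfpos x hx0).le ?_
              positivity
          _ = K₁ := rfl
    -- assemble the three pieces
    have h1 : (∫⁻ x in Set.Ioc (0:ℝ) X,
        ENNReal.ofReal (Falpha α (g x / f x) * f x)) < ⊤ := by
      calc (∫⁻ x in Set.Ioc (0:ℝ) X, ENNReal.ofReal (Falpha α (g x / f x) * f x))
          ≤ ∫⁻ _ in Set.Ioc (0:ℝ) X, ENNReal.ofReal K₁ := by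
            refine setLIntegral_mono' measurableSet_Ioc (fun x hx => ?_)
            exact ENNReal.ofReal_le_ofReal (hbound1 x hx)
        _ = ENNReal.ofReal K₁ * volume (Set.Ioc (0:ℝ) X) := setLIntegral_const _ _
        _ < ⊤ := by
            rw [Real.volume_Ioc]
            exact ENNReal.mul_lt_top ENNReal.ofReal_lt_top ENNReal.ofReal_lt_top
    have h2 : (∫⁻ x in Set.Ioi X ∩ U,
        ENNReal.ofReal (Falpha α (g x / f x) * f x)) < ⊤ := by
      calc (∫⁻ x in Set.Ioi X ∩ U, ENNReal.ofReal (Falpha α (g x / f x) * f x))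
          ≤ ∫⁻ x in Set.Ioi X ∩ U,
              ENNReal.ofReal ((α*(α-1))⁻¹) * ENNReal.ofReal (f x ^ t) := by
            refine setLIntegral_mono' (measurableSet_Ioi.inter hUmeas) (fun x hx => ?_)
            rw [← ENNReal.ofReal_mul (by positivity)]
            exact ENNReal.ofReal_le_ofReal (hbound2 x hx)
        _ ≤ ∫⁻ x in Set.Ioi (0:ℝ),
              ENNReal.ofReal ((α*(α-1))⁻¹) * ENNReal.ofReal (f x ^ t) :=
            lintegral_mono_set (Set.inter_subset_left.trans hXsub)
        _ = ENNReal.ofReal ((α*(α-1))⁻¹) * ∫⁻ x in Set.Ioi (0:ℝ), ENNReal.ofReal (f x ^ t) :=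
            lintegral_const_mul' _ _ ENNReal.ofReal_ne_top
        _ < ⊤ := ENNReal.mul_lt_top ENNReal.ofReal_lt_top (hTfin t ht1)
    have h3 : (∫⁻ x in Set.Ioi X \ U,
        ENNReal.ofReal (Falpha α (g x / f x) * f x)) < ⊤ := by
      calc (∫⁻ x in Set.Ioi X \ U, ENNReal.ofReal (Falpha α (g x / f x) * f x))
          ≤ ∫⁻ _ in Set.Ioi X \ U, ENNReal.ofReal ((α*(α-1))⁻¹ * K₂) := by
            refine setLIntegral_mono' (measurableSet_Ioi.diff hUmeas) (fun x hx => ?_)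
            exact ENNReal.ofReal_le_ofReal (hbound3 x hx)
        _ = ENNReal.ofReal ((α*(α-1))⁻¹ * K₂) * volume (Set.Ioi X \ U) := setLIntegral_const _ _
        _ ≤ ENNReal.ofReal ((α*(α-1))⁻¹ * K₂) * 1 := by
            refine mul_le_mul_right (hbig _ (fun x hx => hXsub hx.1) hfge1) _
        _ < ⊤ := by
            rw [mul_one]
            exact ENNReal.ofReal_lt_top
    have hcover : Set.Ioi (0:ℝ) ⊆ Set.Ioc 0 X ∪ (Set.Ioi X ∩ U ∪ Set.Ioi X \ U) := by
      intro x hx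
      rcases le_or_gt x X with h | h
      · exact Or.inl ⟨hx, h⟩
      · by_cases hu : x ∈ U
        · exact Or.inr (Or.inl ⟨h, hu⟩)
        · exact Or.inr (Or.inr ⟨h, hu⟩)
    calc Ddiv (Falpha α) f g
        = ∫⁻ x in Set.Ioi (0:ℝ), ENNReal.ofReal (Falpha α (g x / f x) * f x) := rfl
      _ ≤ ∫⁻ x in Set.Ioc 0 X ∪ (Set.Ioi X ∩ U ∪ Set.Ioi X \ U),
            ENNReal.ofReal (Falpha α (g x / f x) * f x) := lintegral_mono_set hcover
      _ ≤ (∫⁻ x in Set.Ioc (0:ℝ) X, ENNReal.ofReal (Falpha α (g x / f x) * f x)) +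
            ∫⁻ x in Set.Ioi X ∩ U ∪ Set.Ioi X \ U,
              ENNReal.ofReal (Falpha α (g x / f x) * f x) := lintegral_union_le _ _ _
      _ ≤ (∫⁻ x in Set.Ioc (0:ℝ) X, ENNReal.ofReal (Falpha α (g x / f x) * f x)) +
            ((∫⁻ x in Set.Ioi X ∩ U, ENNReal.ofReal (Falpha α (g x / f x) * f x)) +
              ∫⁻ x in Set.Ioi X \ U, ENNReal.ofReal (Falpha α (g x / f x) * f x)) :=
          add_le_add_right (lintegral_union_le _ _ _) _
      _ < ⊤ := ENNReal.add_lt_top.mpr ⟨h1, ENNReal.add_lt_top.mpr ⟨h2, h3⟩⟩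
  · -- `H < T` : divergence
    intro hHT
    set t : ℝ := (H + T)/2 with htdef
    have ht1 : H < t := by rw [htdef]; linarith
    have ht2 : t < T := by rw [htdef]; linarith
    obtain ⟨X₀, hX₀⟩ := Filter.eventually_atTop.mp (hconv.eventually_lt_const ht1)
    set X : ℝ := max X₀ 1 with hXdef
    have hX1 : (1:ℝ) ≤ X := le_max_right _ _
    have hXsub : Set.Ioi X ⊆ Set.Ioi (0:ℝ) := fun x hx =>
      lt_trans (lt_of_lt_of_le one_pos hX1) hx
    set S : Set ℝ := Set.Ioi X ∩ U with hSdef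
    have hSmeas : MeasurableSet S := measurableSet_Ioi.inter hUmeas
    have hSsub : S ⊆ Set.Ioi (0:ℝ) := fun x hx => hXsub hx.1
    -- on `S`, the alternative density dominates `f ^ t`
    have hkey : ∀ x ∈ S, f x ^ t ≤ (g x / f x) ^ α * f x := by
      rintro x ⟨hx, hxU⟩
      have hx0 : x ∈ Set.Ioi (0:ℝ) := hXsub hx
      have hflt : f x < 1 := hxU.2
      have hφpos : 0 < φ x := by
        by_contra hle
        push_neg at hle
        have h1 : (1:ℝ) ≤ f x := by
          rw [hf x hx0]
          exact Real.one_le_exp (by linarith)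
        linarith
      have hhx : α * γ x / φ x - (α - 1) < t := hX₀ x (le_trans (le_max_left _ _) hx.le)
      have hγ : α * γ x < (t + (α - 1)) * φ x := by
        have h' : α * γ x / φ x < t + (α-1) := by linarith
        exact (div_lt_iff₀ hφpos).mp h'
      rw [hE x hx0, hft t x hx0]
      exact Real.exp_le_exp.mpr (by nlinarith)
    -- the `f ≥ 1` part of the tail has finite `f ^ t` integral
    have hfge1 : ∀ x ∈ Set.Ioi X \ U, 1 ≤ f x := by
      rintro x ⟨hx, hxU⟩
      by_contra hlt
      push_neg at hlt
      exact hxU ⟨hXsub hx, hlt⟩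
    have hrest : (∫⁻ x in Set.Ioi X \ U, ENNReal.ofReal (f x ^ t)) < ⊤ := by
      have hb : ∀ x ∈ Set.Ioi X \ U, f x ^ t ≤ M' ^ |t| := by
        intro x hx
        rcases le_or_gt 0 t with h0 | h0
        · calc f x ^ t ≤ M' ^ t :=
              Real.rpow_le_rpow (hfpos _ (hXsub hx.1)).le (hfM _ (hXsub hx.1)) h0
            _ = M' ^ |t| := by rw [abs_of_nonneg h0]
        · calc f x ^ t ≤ 1 := Real.rpow_le_one_of_one_le_of_nonpos (hfge1 x hx) h0.le
            _ = (1:ℝ) ^ |t| := (Real.one_rpow _).symm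
            _ ≤ M' ^ |t| := Real.rpow_le_rpow zero_le_one hM'1 (abs_nonneg t)
      calc (∫⁻ x in Set.Ioi X \ U, ENNReal.ofReal (f x ^ t))
          ≤ ∫⁻ _ in Set.Ioi X \ U, ENNReal.ofReal (M' ^ |t|) := by
            refine setLIntegral_mono' (measurableSet_Ioi.diff hUmeas) (fun x hx => ?_)
            exact ENNReal.ofReal_le_ofReal (hb x hx)
        _ = ENNReal.ofReal (M' ^ |t|) * volume (Set.Ioi X \ U) := setLIntegral_const _ _
        _ ≤ ENNReal.ofReal (M' ^ |t|) * 1 :=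
            mul_le_mul_right (hbig _ (fun x hx => hXsub hx.1) hfge1) _
        _ < ⊤ := by rw [mul_one]; exact ENNReal.ofReal_lt_top
    -- the `f ^ t` integral over `S` is infinite
    have hStop : (∫⁻ x in S, ENNReal.ofReal (f x ^ t)) = ⊤ := by
      have htail := hTail t ht2 X hX1
      by_contra hne
      have hsplit : (∫⁻ x in Set.Ioi X, ENNReal.ofReal (f x ^ t)) ≤
          (∫⁻ x in S, ENNReal.ofReal (f x ^ t)) +
            ∫⁻ x in Set.Ioi X \ U, ENNReal.ofReal (f x ^ t) := by
        refine le_trans (lintegral_mono_set ?_) (lintegral_union_le _ _ _)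
        intro x hx
        by_cases hu : x ∈ U
        · exact Or.inl ⟨hx, hu⟩
        · exact Or.inr ⟨hx, hu⟩
      rw [htail] at hsplit
      exact absurd (lt_of_le_of_lt hsplit
        (ENNReal.add_lt_top.mpr ⟨lt_top_iff_ne_top.mpr hne, hrest⟩)) (lt_irrefl _)
    -- pointwise domination
    have hpt : ∀ x ∈ S, ENNReal.ofReal (f x ^ t) ≤
        ENNReal.ofReal (α*(α-1)) * ENNReal.ofReal (Falpha α (g x / f x) * f x) +
          ENNReal.ofReal (f x) := by
      intro x hxS
      have hx0 : x ∈ Set.Ioi (0:ℝ) := hSsub hxS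
      have hreal : f x ^ t ≤ (α*(α-1)) * max (Falpha α (g x / f x) * f x) 0 + f x := by
        rcases le_or_gt (Falpha α (g x / f x) * f x) 0 with hneg | hpos
        · rw [max_eq_right hneg, mul_zero, zero_add]
          have hE' := hkey x hxS
          have h2 : ((g x / f x) ^ α * f x - f x) / (α * (α - 1)) ≤ 0 := by
            rw [← hFf x hx0]; exact hneg
          have h3 : (g x / f x) ^ α * f x - f x ≤ 0 := by
            by_contra h4
            push_neg at h4
            have := div_pos h4 hc
            linarith
          linarith
        · rw [max_eq_left hpos.le, hFf x hx0]
          have h5 : (α*(α-1)) * (((g x / f x) ^ α * f x - f x)/(α*(α-1))) =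
              (g x / f x) ^ α * f x - f x := by
            exact mul_div_cancel₀ _ hc.ne'
          rw [h5]
          linarith [hkey x hxS]
      calc ENNReal.ofReal (f x ^ t)
          ≤ ENNReal.ofReal ((α*(α-1)) * max (Falpha α (g x / f x) * f x) 0 + f x) :=
            ENNReal.ofReal_le_ofReal hreal
        _ = ENNReal.ofReal ((α*(α-1)) * max (Falpha α (g x / f x) * f x) 0) +
              ENNReal.ofReal (f x) :=
            ENNReal.ofReal_add (by positivity) (hfpos x hx0).le
        _ = ENNReal.ofReal (α*(α-1)) *
              ENNReal.ofReal (max (Falpha α (g x / f x) * f x) 0) +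
              ENNReal.ofReal (f x) := by rw [ENNReal.ofReal_mul hc.le]
        _ = ENNReal.ofReal (α*(α-1)) * ENNReal.ofReal (Falpha α (g x / f x) * f x) +
              ENNReal.ofReal (f x) := by rw [ofReal_max_zero']
    have hfin : (∫⁻ x in S, ENNReal.ofReal (f x)) < ⊤ :=
      lt_of_le_of_lt (lintegral_mono_set hSsub) (by rw [hfl1]; exact ENNReal.one_lt_top)
    have hfmS : AEMeasurable f (volume.restrict S) := (hfc.mono hSsub).aemeasurable hSmeas
    have hgmS : AEMeasurable g (volume.restrict S) := (hgc.mono hSsub).aemeasurable hSmeas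
    have hIm : AEMeasurable (fun x => ENNReal.ofReal (Falpha α (g x / f x) * f x))
        (volume.restrict S) := by
      have h1 : AEMeasurable (fun x => (g x / f x) ^ α) (volume.restrict S) :=
        (Real.continuous_rpow_const hα0.le).measurable.comp_aemeasurable (hgmS.div hfmS)
      have h2 : AEMeasurable (fun x => Falpha α (g x / f x) * f x) (volume.restrict S) := by
        simp only [Falpha]
        exact ((h1.sub aemeasurable_const).div_const _).mul hfmS
      exact h2.ennreal_ofReal
    have hIntS : (∫⁻ x in S, ENNReal.ofReal (f x ^ t)) ≤
        ENNReal.ofReal (α*(α-1)) *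
          (∫⁻ x in S, ENNReal.ofReal (Falpha α (g x / f x) * f x)) +
          ∫⁻ x in S, ENNReal.ofReal (f x) := by
      calc (∫⁻ x in S, ENNReal.ofReal (f x ^ t))
          ≤ ∫⁻ x in S, (ENNReal.ofReal (α*(α-1)) *
              ENNReal.ofReal (Falpha α (g x / f x) * f x) + ENNReal.ofReal (f x)) :=
            setLIntegral_mono' hSmeas hpt
        _ = (∫⁻ x in S, ENNReal.ofReal (α*(α-1)) *
              ENNReal.ofReal (Falpha α (g x / f x) * f x)) +
              ∫⁻ x in S, ENNReal.ofReal (f x) :=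
            lintegral_add_left' (hIm.const_mul _) _
        _ = ENNReal.ofReal (α*(α-1)) *
              (∫⁻ x in S, ENNReal.ofReal (Falpha α (g x / f x) * f x)) +
              ∫⁻ x in S, ENNReal.ofReal (f x) := by
            rw [lintegral_const_mul' _ _ ENNReal.ofReal_ne_top]
    rw [hStop] at hIntS
    have hItop : (∫⁻ x in S, ENNReal.ofReal (Falpha α (g x / f x) * f x)) = ⊤ := by
      by_contra hne
      exact absurd (lt_of_le_of_lt hIntS (ENNReal.add_lt_top.mpr
        ⟨ENNReal.mul_lt_top ENNReal.ofReal_lt_top (lt_top_iff_ne_top.mpr hne), hfin⟩))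
        (lt_irrefl _)
    have hmono : (∫⁻ x in S, ENNReal.ofReal (Falpha α (g x / f x) * f x)) ≤
        ∫⁻ x in Set.Ioi (0:ℝ), ENNReal.ofReal (Falpha α (g x / f x) * f x) :=
      lintegral_mono_set hSsub
    rw [hItop] at hmono
    exact top_le_iff.mp hmono
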